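/- Let x : [a,b] → ℝⁿ be absolutely continuous with x(t) ∈ C for all t ∈ [a,b], where C ⊆ ℝⁿ. Then for almost every t ∈ (a,b), the derivative x'(t) exists and x'(t) ∈ T_C(x(t)), the contingent cone of C at x(t). -/

import Mathlib

open Filter Set MeasureTheory

/-- Absolute continuity of a function on the interval `[a, b]`. -/
def AbsolutelyContinuousOnInterval' {X : Type*} [PseudoMetricSpace X]
    (f : ℝ → X) (a b : ℝ) : Prop :=
  ∀ ε > (0 : ℝ), ∃ δ > (0 : ℝ), ∀ (k : ℕ) (s t : Fin k → ℝ),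
    (∀ i, s i ∈ Set.Icc a b ∧ t i ∈ Set.Icc a b ∧ s i ≤ t i) →
    (Pairwise fun i j => Disjoint (Set.Ioo (s i) (t i)) (Set.Ioo (s j) (t j))) →
    (∑ i, (t i - s i)) < δ → (∑ i, dist (f (s i)) (f (t i))) < ε

/-- The contingent cone of `C` at `y` (sequence characterization). -/
def contingentCone {n : ℕ} (C : Set (EuclideanSpace ℝ (Fin n)))
    (y : EuclideanSpace ℝ (Fin n)) : Set (EuclideanSpace ℝ (Fin n)) :=
  {v | ∃ (h : ℕ → ℝ) (w : ℕ → EuclideanSpace ℝ (Fin n)),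
      (∀ i, 0 < h i) ∧ Filter.Tendsto h Filter.atTop (nhds 0) ∧
        Filter.Tendsto w Filter.atTop (nhds v) ∧ ∀ i, y + h i • w i ∈ C}

/-- Derivative at an interior point lies in the contingent cone. -/
lemma mem_contingentCone_of_hasDerivAt {n : ℕ} {C : Set (EuclideanSpace ℝ (Fin n))}
    {x : ℝ → EuclideanSpace ℝ (Fin n)} {a b t : ℝ}
    (hmem : ∀ s ∈ Set.Icc a b, x s ∈ C) (ht : t ∈ Set.Ioo a b)
    {v : EuclideanSpace ℝ (Fin n)} (hv : HasDerivAt x v t) :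
    v ∈ contingentCone C (x t) := by
  set h : ℕ → ℝ := fun i => min ((b - t) / 2) (1 / (i + 1)) with hh
  have hpos : ∀ i, 0 < h i := fun i =>
    lt_min (by have := ht.2; linarith) (by positivity)
  have hto0 : Tendsto h atTop (nhds 0) := by
    apply squeeze_zero (fun i => (hpos i).le) (fun i => min_le_right _ _)
    exact tendsto_one_div_add_atTop_nhds_zero_nat
  have hne : ∀ i, t + h i ≠ t := fun i => by have := hpos i; intro hc; linarith [hc]
  have hmemIcc : ∀ i, t + h i ∈ Set.Icc a b := fun i => by
    constructor
    · have := (hpos i).le; linarith [ht.1]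
    · have h1 : h i ≤ (b - t) / 2 := min_le_left _ _
      have := ht.2; linarith
  refine ⟨h, fun i => (h i)⁻¹ • (x (t + h i) - x t), hpos, hto0, ?_, ?_⟩
  · have hs := hasDerivAt_iff_tendsto_slope.mp hv
    have htt : Tendsto (fun i => t + h i) atTop (nhdsWithin t {t}ᶜ) := by
      apply tendsto_nhdsWithin_of_tendsto_nhds_of_eventually_within
      · have : Tendsto (fun i => t + h i) atTop (nhds (t + 0)) :=
          (tendsto_const_nhds.add hto0)
        simpa using this
      · exact Eventually.of_forall fun i => hne i
    have := hs.comp htt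
    convert this using 2 with i
    simp only [Function.comp, slope_def_module, add_sub_cancel_left]
  · intro i
    have hne0 : h i ≠ 0 := (hpos i).ne'
    have : x t + h i • (h i)⁻¹ • (x (t + h i) - x t) = x (t + h i) := by
      rw [smul_inv_smul₀ hne0]
      abel
    rw [this]
    exact hmem _ (hmemIcc i)

theorem stmt_8 {n : ℕ} (a b : ℝ) (hab : a ≤ b)
    (C : Set (EuclideanSpace ℝ (Fin n)))
    (x : ℝ → EuclideanSpace ℝ (Fin n))
    (hAC : AbsolutelyContinuousOnInterval' x a b)
    (hmem : ∀ t ∈ Set.Icc a b, x t ∈ C) :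
    ∀ᵐ t ∂(volume.restrict (Set.Ioo a b)),
      ∃ v, HasDerivAt x v t ∧ v ∈ contingentCone C (x t) := by
  obtain ⟨δ, hδ, hACδ⟩ := hAC 1 one_pos
  -- variation on short subintervals is at most 1
  have small : ∀ c d : ℝ, c ∈ Set.Icc a b → d ∈ Set.Icc a b → c ≤ d → d - c < δ →
      eVariationOn x (Set.Icc c d) ≤ 1 := by
    intro c d hc hd hcd hlen
    refine iSup_le ?_
    rintro ⟨m, u, hu, hus⟩
    have hmem' : ∀ i, u i ∈ Set.Icc a b :=
      fun i => ⟨hc.1.trans (hus i).1, (hus i).2.trans hd.2⟩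
    have key : (∑ i : Fin m, dist (x (u i)) (x (u (i + 1)))) < 1 := by
      apply hACδ m (fun i => u i) (fun i => u (i + 1))
      · intro i
        exact ⟨hmem' i, hmem' (i + 1), hu (Nat.le_succ i)⟩
      · intro i j hij
        rcases hij.lt_or_gt with hlt | hlt
        · rw [Set.disjoint_left]
          intro y hy hy'
          have h1 : u (↑i + 1) ≤ u ↑j := hu (by omega)
          exact absurd (hy.2.trans_le (h1.trans hy'.1.le)) (lt_irrefl y)
        · rw [Set.disjoint_left]
          intro y hy hy'
          have h1 : u (↑j + 1) ≤ u ↑i := hu (by omega)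
          exact absurd (hy'.2.trans_le (h1.trans hy.1.le)) (lt_irrefl y)
      · have htel : (∑ i : Fin m, (u (↑i + 1) - u ↑i)) = u m - u 0 := by
          rw [Fin.sum_univ_eq_sum_range (fun i => u (i + 1) - u i) m]
          exact Finset.sum_range_sub u m
        rw [htel]
        have h1 := (hus m).2
        have h2 := (hus 0).1
        linarith
    calc (∑ i ∈ Finset.range m, edist (x (u (i + 1))) (x (u i)))
        = ENNReal.ofReal (∑ i ∈ Finset.range m, dist (x (u (i + 1))) (x (u i))) := by
          rw [ENNReal.ofReal_sum_of_nonneg (fun i _ => dist_nonneg)]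
          exact Finset.sum_congr rfl fun i _ => edist_dist _ _
      _ ≤ ENNReal.ofReal 1 := by
          apply ENNReal.ofReal_le_ofReal
          rw [← Fin.sum_univ_eq_sum_range (fun i => dist (x (u (i + 1))) (x (u i))) m]
          refine le_of_lt ?_
          calc (∑ i : Fin m, dist (x (u (↑i + 1))) (x (u ↑i)))
              = ∑ i : Fin m, dist (x (u ↑i)) (x (u (↑i + 1))) := by
                exact Finset.sum_congr rfl fun i _ => dist_comm _ _
            _ < 1 := key
      _ = 1 := ENNReal.ofReal_one
  -- total variation is finite, by induction on the number of δ/2-pieces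
  have total : ∀ N : ℕ, ∀ c, c ∈ Set.Icc a b → b - c ≤ N * (δ / 2) →
      eVariationOn x (Set.Icc c b) ≤ N := by
    intro N
    induction N with
    | zero =>
        intro c hc h0
        have hcb : c = b := le_antisymm hc.2 (by simpa using h0)
        subst hcb
        rw [Set.Icc_self]
        rw [eVariationOn.subsingleton x (Set.subsingleton_singleton)]
        simp
    | succ N ih =>
        intro c hc hlen
        set c' := min (c + δ / 2) b with hc'def
        have hcc' : c ≤ c' := le_min (by linarith) hc.2
        have hc'b : c' ≤ b := min_le_right _ _
        have hc'mem : c' ∈ Set.Icc a b := ⟨hc.1.trans hcc', hc'b⟩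
        have h1 : eVariationOn x (Set.Icc c c') ≤ 1 := by
          apply small c c' hc hc'mem hcc'
          have : c' ≤ c + δ / 2 := min_le_left _ _
          linarith
        have h2 : eVariationOn x (Set.Icc c' b) ≤ N := by
          apply ih c' hc'mem
          rcases le_or_gt (c + δ / 2) b with hle | hlt
          · have : c' = c + δ / 2 := min_eq_left hle
            rw [this]
            push_cast at hlen ⊢
            linarith
          · have : c' = b := min_eq_right hlt.le
            rw [this]
            simp [mul_nonneg (Nat.cast_nonneg N) (by linarith : (0:ℝ) ≤ δ / 2)]
        have hadd : eVariationOn x (Set.Icc c c') + eVariationOn x (Set.Icc c' b)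
            = eVariationOn x (Set.Icc c b) := by
          have := eVariationOn.Icc_add_Icc x (s := Set.univ) hcc' hc'b (Set.mem_univ c')
          simpa using this
        rw [← hadd]
        calc eVariationOn x (Set.Icc c c') + eVariationOn x (Set.Icc c' b)
            ≤ 1 + (N : ENNReal) := add_le_add h1 h2
          _ = ((N + 1 : ℕ) : ENNReal) := by push_cast; rw [add_comm]
  have hbv : BoundedVariationOn x (Set.Icc a b) := by
    set N₀ := ⌈(b - a) / (δ / 2)⌉₊
    have : eVariationOn x (Set.Icc a b) ≤ N₀ := by
      apply total N₀ a ⟨le_refl a, hab⟩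
      have h1 : (b - a) / (δ / 2) ≤ N₀ := Nat.le_ceil _
      have h2 : (0:ℝ) < δ / 2 := by linarith
      calc b - a = ((b - a) / (δ / 2)) * (δ / 2) := by field_simp
        _ ≤ N₀ * (δ / 2) := by
            apply mul_le_mul_of_nonneg_right h1 h2.le
    exact ne_top_of_le_ne_top (ENNReal.natCast_ne_top _) this
  have hlbv : LocallyBoundedVariationOn x (Set.Icc a b) :=
    fun _ _ _ _ => hbv.mono Set.inter_subset_left
  have hdiff := hlbv.ae_differentiableWithinAt measurableSet_Icc
  have hdiff' : ∀ᵐ t ∂(volume.restrict (Set.Ioo a b)),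
      DifferentiableWithinAt ℝ x (Set.Icc a b) t :=
    ae_mono (Measure.restrict_mono Set.Ioo_subset_Icc_self le_rfl) hdiff
  filter_upwards [hdiff', ae_restrict_mem measurableSet_Ioo] with t hdw ht
  have ht' : Set.Icc a b ∈ nhds t :=
    Filter.mem_of_superset (isOpen_Ioo.mem_nhds ht) Set.Ioo_subset_Icc_self
  have hda : DifferentiableAt ℝ x t := hdw.differentiableAt ht'
  exact ⟨deriv x t, hda.hasDerivAt, mem_contingentCone_of_hasDerivAt hmem ht hda.hasDerivAt⟩
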